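/- Let λ,μ > 0 and let g : ℝ → ℝ be continuous satisfying (g1) and (g3): lim_{t→0} g(t)/t = 0. Let {u_j} ⊂ X₀ be a bounded sequence weakly convergent in X₀ to some u_∞ ∈ X₀, and suppose that for every v ∈ X₀, ⟨u_j,v⟩ − μ∫_Ω |u_j|^{2*−2}u_j v dx − λ∫_Ω g(u_j) v dx → 0 as j → ∞. Then u_∞ is a weak solution of (P_{λ,μ}): ⟨u_∞,v⟩ = μ∫_Ω |u_∞|^{2*−2}u_∞ v dx + λ∫_Ω g(u_∞) v dx for every v ∈ X₀. -/

import Mathlib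

open MeasureTheory Filter Topology Set

noncomputable section

/-- Euclidean space `ℝⁿ`. -/
abbrev EV (n : ℕ) := EuclideanSpace ℝ (Fin n)

/-- The fractional critical Sobolev exponent `2* = 2n/(n-2s)`. -/
def twoStar (n : ℕ) (s : ℝ) : ℝ := 2 * n / (n - 2 * s)

/-- Gagliardo-type bilinear form `⟨u,v⟩ = ∬ (u(x)-u(y))(v(x)-v(y)) K(x-y) dx dy`. -/
def gInner {n : ℕ} (K : EV n → ℝ) (u v : EV n → ℝ) : ℝ :=
  ∫ p : EV n × EV n, (u p.1 - u p.2) * (v p.1 - v p.2) * K (p.1 - p.2)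

/-- Gagliardo norm `‖u‖ = ⟨u,u⟩^{1/2}`. -/
def gNorm {n : ℕ} (K : EV n → ℝ) (u : EV n → ℝ) : ℝ := Real.sqrt (gInner K u u)

/-- Membership in the space `X₀`: measurable, vanishing a.e. outside `Ω`,
with finite Gagliardo seminorm. -/
structure MemX0 {n : ℕ} (K : EV n → ℝ) (Ω : Set (EV n)) (u : EV n → ℝ) : Prop where
  meas : Measurable u
  zero : ∀ᵐ x ∂(volume : Measure (EV n)), x ∉ Ω → u x = 0
  fin : Integrable (fun p : EV n × EV n => (u p.1 - u p.2) ^ 2 * K (p.1 - p.2))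

/-- `L^p` norm (real exponent `p`) on `Ω`. -/
def lpNorm {n : ℕ} (Ω : Set (EV n)) (p : ℝ) (u : EV n → ℝ) : ℝ :=
  (∫ x in Ω, |u x| ^ p) ^ (1 / p)

/-- Weak convergence in `X₀`. -/
def WeakConv {n : ℕ} (K : EV n → ℝ) (Ω : Set (EV n)) (uj : ℕ → EV n → ℝ)
    (u : EV n → ℝ) : Prop :=
  ∀ v, MemX0 K Ω v → Tendsto (fun j => gInner K (uj j) v) atTop (𝓝 (gInner K u v))

/-- The singular kernel `|x|^{-(n+2s)}` of the fractional Laplacian. -/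
def fracKernel (n : ℕ) (s : ℝ) : EV n → ℝ := fun x => ‖x‖ ^ (-((n : ℝ) + 2 * s))

/-- The energy functional `E_{λ,μ}`. -/
def energy {n : ℕ} (s : ℝ) (K : EV n → ℝ) (Ω : Set (EV n)) (μ lam : ℝ)
    (g : ℝ → ℝ) (u : EV n → ℝ) : ℝ :=
  1 / 2 * gNorm K u ^ 2 - μ / twoStar n s * (∫ x in Ω, |u x| ^ twoStar n s)
    - lam * ∫ x in Ω, (∫ τ in (0:ℝ)..(u x), g τ)

/-- The functional `Ê_μ`. -/
def energyHat {n : ℕ} (s : ℝ) (K : EV n → ℝ) (Ω : Set (EV n)) (μ : ℝ)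
    (u : EV n → ℝ) : ℝ :=
  1 / 2 * gNorm K u ^ 2 - μ / twoStar n s * (∫ x in Ω, |u x| ^ twoStar n s)

/-- The functional `Ẽ_{λ,μ}`. -/
def energyTilde {n : ℕ} (s : ℝ) (K : EV n → ℝ) (Ω : Set (EV n)) (μ lam : ℝ)
    (g : ℝ → ℝ) (u : EV n → ℝ) : ℝ :=
  μ / twoStar n s * (∫ x in Ω, |u x| ^ twoStar n s)
    + lam * ∫ x in Ω, (∫ τ in (0:ℝ)..(u x), g τ)

/-- The energy functional of the singular problem. -/
def energySing {n : ℕ} (s : ℝ) (K : EV n → ℝ) (Ω : Set (EV n)) (μ lam r : ℝ)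
    (g : ℝ → ℝ) (u : EV n → ℝ) : ℝ :=
  1 / 2 * gNorm K u ^ 2 - μ / twoStar n s * (∫ x in Ω, (max (u x) 0) ^ twoStar n s)
    - lam / r * (∫ x in Ω, (max (u x) 0) ^ r)
    - lam * ∫ x in Ω, (∫ τ in (0:ℝ)..(max (u x) 0), g τ)


open scoped ENNReal NNReal

section Aux16

private lemma vitali_mul {α : Type*} [MeasurableSpace α] {ν : Measure α} [IsFiniteMeasure ν]
    {t r : ℝ≥0∞} (hrt : 1/t + 1/r = 1) (hr1 : 1 ≤ r) (hrtop : r ≠ ∞)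
    {h : ℕ → α → ℝ} {hlim : α → ℝ} {v : α → ℝ}
    (hmeas : ∀ j, AEStronglyMeasurable (h j) ν)
    (hv : MemLp v r ν)
    {C : ℝ≥0∞} (hC : C ≠ ∞) (hbd : ∀ j, eLpNorm (h j) t ν ≤ C)
    (hae : ∀ᵐ x ∂ν, Tendsto (fun j => h j x) atTop (𝓝 (hlim x))) :
    Tendsto (fun j => ∫ x, h j x * v x ∂ν) atTop (𝓝 (∫ x, hlim x * v x ∂ν)) := by
  have hlimmeas : AEStronglyMeasurable hlim ν :=
    aestronglyMeasurable_of_tendsto_ae atTop hmeas hae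
  have hlimt : eLpNorm hlim t ν ≤ C := by
    refine (Lp.eLpNorm_lim_le_liminf_eLpNorm hmeas hlim hae).trans ?_
    refine (Filter.liminf_le_liminf (Eventually.of_forall hbd)).trans ?_
    simp
  have hmem : ∀ j, MemLp (h j) t ν := fun j => ⟨hmeas j, (hbd j).trans_lt hC.lt_top⟩
  have hlimmem : MemLp hlim t ν := ⟨hlimmeas, hlimt.trans_lt hC.lt_top⟩
  have h1tr : (1 : ℝ≥0∞)/1 = 1/t + 1/r := by simpa using hrt.symm
  haveI : ENNReal.HolderTriple t r 1 := ⟨by simpa [one_div] using hrt⟩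
  have hFmem : ∀ j, MemLp (fun x => h j x * v x) 1 ν := fun j => hv.smul (hmem j)
  have hFlimmem : MemLp (fun x => hlim x * v x) 1 ν := hv.smul hlimmem
  have hui : UnifIntegrable (fun j x => h j x * v x) 1 ν := by
    intro ε hε
    have hden : (0:ℝ) < C.toReal + 1 := by positivity
    have hε' : 0 < ε / (C.toReal + 1) := by positivity
    obtain ⟨δ, hδ, hsmall⟩ := hv.eLpNorm_indicator_le hr1 hrtop hε'
    refine ⟨δ, hδ, fun j s hs hνs => ?_⟩
    have hind : s.indicator (fun x => h j x * v x) = fun x => h j x * s.indicator v x := by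
      funext x
      by_cases hx : x ∈ s <;> simp [Set.indicator, hx]
    rw [hind]
    have hhold : eLpNorm (fun x => h j x * s.indicator v x) 1 ν
        ≤ eLpNorm (h j) t ν * eLpNorm (s.indicator v) r ν := by
      have := eLpNorm_smul_le_mul_eLpNorm (f := s.indicator v) (φ := h j) (p := t) (q := r) (r := 1)
        (hv.1.indicator hs) (hmeas j)
      exact this
    refine hhold.trans ?_
    calc eLpNorm (h j) t ν * eLpNorm (s.indicator v) r ν
        ≤ C * ENNReal.ofReal (ε / (C.toReal + 1)) :=
          mul_le_mul' (hbd j) (hsmall s hs hνs)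
      _ ≤ ENNReal.ofReal (C.toReal + 1) * ENNReal.ofReal (ε / (C.toReal + 1)) := by
          refine mul_le_mul_left ?_ _
          conv_lhs => rw [← ENNReal.ofReal_toReal hC]
          exact ENNReal.ofReal_le_ofReal (by linarith)
      _ = ENNReal.ofReal ((C.toReal + 1) * (ε / (C.toReal + 1))) := by
          rw [ENNReal.ofReal_mul hden.le]
      _ = ENNReal.ofReal ε := by rw [mul_div_cancel₀ _ hden.ne']
  have htL : Tendsto (fun j => eLpNorm ((fun x => h j x * v x) - fun x => hlim x * v x) 1 ν)
      atTop (𝓝 0) := by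
    refine tendsto_Lp_finite_of_tendsto_ae le_rfl ENNReal.one_ne_top
      (fun j => (hFmem j).1) hFlimmem hui ?_
    filter_upwards [hae] with x hx using hx.mul_const (v x)
  have hint : ∀ j, Integrable (fun x => h j x * v x) ν :=
    fun j => memLp_one_iff_integrable.mp (hFmem j)
  have hintlim : Integrable (fun x => hlim x * v x) ν := memLp_one_iff_integrable.mp hFlimmem
  rw [tendsto_iff_dist_tendsto_zero]
  refine squeeze_zero (fun j => dist_nonneg) (g := fun j =>
    (eLpNorm ((fun x => h j x * v x) - fun x => hlim x * v x) 1 ν).toReal) (fun j => ?_)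
    (by simpa [Function.comp_def] using ((ENNReal.tendsto_toReal (by simp)).comp htL))
  · show dist _ _ ≤ (eLpNorm ((fun x => h j x * v x) - fun x => hlim x * v x) 1 ν).toReal
    rw [Real.dist_eq, ← integral_sub (hint j) hintlim]
    have habs : |∫ x, (h j x * v x - hlim x * v x) ∂ν| ≤ ∫ x, ‖h j x * v x - hlim x * v x‖ ∂ν := by
      simpa [Real.norm_eq_abs] using
        norm_integral_le_integral_norm (μ := ν) (fun x => h j x * v x - hlim x * v x)
    refine habs.trans (le_of_eq ?_)
    rw [eLpNorm_one_eq_lintegral_enorm]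
    simp only [Pi.sub_apply]
    exact integral_norm_eq_lintegral_enorm ((hint j).sub hintlim).1


variable {n : ℕ} {K : EV n → ℝ} {Ω : Set (EV n)}


variable {n : ℕ} {K : EV n → ℝ} {Ω : Set (EV n)}

private lemma diag_null (hn0 : 0 < n) :
    (volume : Measure (EV n × EV n)) {p : EV n × EV n | p.1 - p.2 = 0} = 0 := by
  haveI : Nontrivial (EV n) := by
    have : Nonempty (Fin n) := ⟨⟨0, hn0⟩⟩
    infer_instance
  rw [MeasureTheory.Measure.volume_eq_prod]
  have h : {p : EV n × EV n | p.1 - p.2 = 0}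
      = (fun z : EV n × EV n => (z.1 - z.2, z.2)) ⁻¹' ({0} ×ˢ univ) := by
    ext p; simp [eq_comm]
  rw [h, (measurePreserving_sub_prod _ _).measure_preimage
    (((measurableSet_singleton (0 : EV n)).prod MeasurableSet.univ)).nullMeasurableSet,
    Measure.prod_prod, measure_singleton, zero_mul]

private lemma K_pos_ae (hn0 : 0 < n) (hKpos : ∀ x : EV n, x ≠ 0 → 0 < K x) :
    ∀ᵐ p : EV n × EV n ∂volume, 0 < K (p.1 - p.2) := by
  rw [ae_iff]
  refine measure_mono_null (fun p hp => ?_) (diag_null hn0)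
  simp only [mem_setOf_eq, not_lt] at hp ⊢
  by_contra h
  exact absurd (hKpos _ h) (not_lt.mpr hp)

private lemma K_aemeas (hn0 : 0 < n)
    (hK1 : Integrable (fun x : EV n => min (‖x‖ ^ 2) 1 * K x)) :
    AEMeasurable K (volume : Measure (EV n)) := by
  haveI : Nontrivial (EV n) := by
    have : Nonempty (Fin n) := ⟨⟨0, hn0⟩⟩
    infer_instance
  have hm : AEMeasurable
      (fun x : EV n => (min (‖x‖ ^ 2) 1)⁻¹ * (min (‖x‖ ^ 2) 1 * K x)) volume := by
    have h1 : Measurable fun x : EV n => (min (‖x‖ ^ 2) 1)⁻¹ :=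
      (((measurable_norm.pow_const 2).min measurable_const).inv)
    exact h1.aemeasurable.mul hK1.1.aemeasurable
  refine hm.congr ?_
  rw [Filter.EventuallyEq, ae_iff]
  refine measure_mono_null (fun x hx => ?_) (measure_singleton (0 : EV n))
  simp only [mem_setOf_eq] at hx ⊢
  by_contra h0
  apply hx
  have hpos : 0 < min (‖x‖ ^ 2) 1 := by
    have : 0 < ‖x‖ := norm_pos_iff.mpr h0
    exact lt_min (by positivity) one_pos
  field_simp

private lemma K_prod_aemeas (hn0 : 0 < n)
    (hK1 : Integrable (fun x : EV n => min (‖x‖ ^ 2) 1 * K x)) :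
    AEMeasurable (fun p : EV n × EV n => K (p.1 - p.2)) (volume : Measure (EV n × EV n)) := by
  rw [MeasureTheory.Measure.volume_eq_prod]
  have h1 : AEMeasurable (fun q : EV n × EV n => K q.1)
      ((volume : Measure (EV n)).prod volume) :=
    (K_aemeas hn0 hK1).comp_quasiMeasurePreserving Measure.quasiMeasurePreserving_fst
  exact h1.comp_quasiMeasurePreserving (measurePreserving_sub_prod _ _).quasiMeasurePreserving

/-- The truncation of `u` at level `T`. -/
private def trunc (T : ℝ) (u : EV n → ℝ) : EV n → ℝ := fun x => max (min (u x) T) (-T)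

private lemma trunc_lip (T a b : ℝ) :
    |max (min a T) (-T) - max (min b T) (-T)| ≤ |a - b| := by
  have h2 : |max (min a T) (-T) - max (min b T) (-T)|
      ≤ max |min a T - min b T| |(-T) - (-T)| := abs_max_sub_max_le_max _ _ _ _
  have h1 : |min a T - min b T| ≤ max |a - b| |T - T| := abs_min_sub_min_le_max a T b T
  simp only [sub_self, abs_zero] at h1 h2
  rw [max_eq_left (abs_nonneg (a - b))] at h1
  rw [max_eq_left (abs_nonneg (min a T - min b T))] at h2
  exact h2.trans h1

private lemma abs_trunc (T : ℝ) (hT : 0 ≤ T) (u : EV n → ℝ) (x : EV n) :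
    |trunc T u x| = min |u x| T := by
  unfold trunc
  rcases le_total 0 (u x) with h | h
  · have hmin : 0 ≤ min (u x) T := le_min h hT
    rw [max_eq_left ((neg_nonpos.mpr hT).trans hmin), abs_of_nonneg hmin, abs_of_nonneg h]
  · have hm : min (u x) T = u x := min_eq_left (h.trans hT)
    rw [hm]
    have hle : max (u x) (-T) ≤ 0 := max_le h (neg_nonpos.mpr hT)
    rw [abs_of_nonpos hle, abs_of_nonpos h, neg_sup, neg_neg]

private lemma trunc_meas (T : ℝ) {u : EV n → ℝ} (hu : Measurable u) :
    Measurable (trunc T u) :=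
  (hu.min measurable_const).max measurable_const

private lemma memX0_trunc (hn0 : 0 < n) (hKpos : ∀ x : EV n, x ≠ 0 → 0 < K x)
    (hK1 : Integrable (fun x : EV n => min (‖x‖ ^ 2) 1 * K x))
    {u : EV n → ℝ} (hu : MemX0 K Ω u) (T : ℝ) (hT : 0 ≤ T) :
    MemX0 K Ω (trunc T u) := by
  refine ⟨trunc_meas T hu.meas, ?_, ?_⟩
  · filter_upwards [hu.zero] with x hx hxΩ
    rw [show trunc T u x = max (min (u x) T) (-T) from rfl, hx hxΩ,
      min_eq_left hT, max_eq_left (neg_nonpos.mpr hT)]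
  · have hmeas : AEStronglyMeasurable
        (fun p : EV n × EV n => (trunc T u p.1 - trunc T u p.2) ^ 2 * K (p.1 - p.2)) volume := by
      have h1 : Measurable fun p : EV n × EV n => (trunc T u p.1 - trunc T u p.2) ^ 2 :=
        (((trunc_meas T hu.meas).comp measurable_fst).sub
          ((trunc_meas T hu.meas).comp measurable_snd)).pow_const 2
      exact (h1.aemeasurable.mul (K_prod_aemeas hn0 hK1)).aestronglyMeasurable
    refine Integrable.mono' hu.fin hmeas ?_
    filter_upwards [K_pos_ae hn0 hKpos] with p hp
    have hsq : (trunc T u p.1 - trunc T u p.2) ^ 2 ≤ (u p.1 - u p.2) ^ 2 := by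
      rw [← sq_abs (trunc T u p.1 - trunc T u p.2), ← sq_abs (u p.1 - u p.2)]
      exact pow_le_pow_left₀ (abs_nonneg _) (trunc_lip T (u p.1) (u p.2)) 2
    rw [Real.norm_eq_abs, abs_of_nonneg (mul_nonneg (sq_nonneg _) hp.le)]
    exact mul_le_mul_of_nonneg_right hsq hp.le

private lemma gInner_integrable {u : EV n → ℝ} (hu : MemX0 K Ω u) :
    Integrable (fun p : EV n × EV n =>
      (u p.1 - u p.2) * (u p.1 - u p.2) * K (p.1 - p.2)) volume :=
  hu.fin.congr (Eventually.of_forall fun p => by ring)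

private lemma gInner_self_nonneg (hn0 : 0 < n) (hKpos : ∀ x : EV n, x ≠ 0 → 0 < K x)
    (u : EV n → ℝ) : 0 ≤ gInner K u u := by
  refine integral_nonneg_of_ae ?_
  filter_upwards [K_pos_ae hn0 hKpos] with p hp
  exact mul_nonneg (mul_self_nonneg _) hp.le

private lemma gInner_trunc_le (hn0 : 0 < n) (hKpos : ∀ x : EV n, x ≠ 0 → 0 < K x)
    {u : EV n → ℝ} (T : ℝ) (hu : MemX0 K Ω u) (hut : MemX0 K Ω (trunc T u)) :
    gInner K (trunc T u) (trunc T u) ≤ gInner K u u := by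
  refine integral_mono_ae (gInner_integrable hut) (gInner_integrable hu) ?_
  filter_upwards [K_pos_ae hn0 hKpos] with p hp
  have hsq : (trunc T u p.1 - trunc T u p.2) * (trunc T u p.1 - trunc T u p.2)
      ≤ (u p.1 - u p.2) * (u p.1 - u p.2) := by
    rw [← sq (trunc T u p.1 - trunc T u p.2), ← sq (u p.1 - u p.2),
      ← sq_abs (trunc T u p.1 - trunc T u p.2), ← sq_abs (u p.1 - u p.2)]
    exact pow_le_pow_left₀ (abs_nonneg _) (trunc_lip T (u p.1) (u p.2)) 2
  exact mul_le_mul_of_nonneg_right hsq hp.le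

private lemma eq_zero_of_gInner_zero (hn0 : 0 < n) (hΩb : Bornology.IsBounded Ω)
    (hKpos : ∀ x : EV n, x ≠ 0 → 0 < K x) {u : EV n → ℝ} (hu : MemX0 K Ω u)
    (hz : gInner K u u = 0) : ∀ᵐ x ∂(volume : Measure (EV n)), u x = 0 := by
  haveI : Nontrivial (EV n) := by
    have : Nonempty (Fin n) := ⟨⟨0, hn0⟩⟩
    infer_instance
  have haenn : 0 ≤ᵐ[volume] fun p : EV n × EV n =>
      (u p.1 - u p.2) * (u p.1 - u p.2) * K (p.1 - p.2) := by
    filter_upwards [K_pos_ae hn0 hKpos] with p hp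
    exact mul_nonneg (mul_self_nonneg _) hp.le
  have h0 : (fun p : EV n × EV n => (u p.1 - u p.2) * (u p.1 - u p.2) * K (p.1 - p.2))
      =ᵐ[volume] 0 := by
    have := (integral_eq_zero_iff_of_nonneg_ae haenn (gInner_integrable hu)).mp hz
    exact this
  have huv : ∀ᵐ p : EV n × EV n ∂volume, u p.1 = u p.2 := by
    filter_upwards [h0, K_pos_ae hn0 hKpos] with p h1 h2
    have hdd : (u p.1 - u p.2) * (u p.1 - u p.2) = 0 := by
      rcases mul_eq_zero.mp h1 with h | h
      · exact h
      · exact absurd h h2.ne'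
    have := mul_self_eq_zero.mp hdd
    linarith [sub_eq_zero.mp this]
  rw [MeasureTheory.Measure.volume_eq_prod] at huv
  have hxy := Measure.ae_ae_of_ae_prod huv
  obtain ⟨R, hR⟩ := hΩb.subset_closedBall 0
  set z : EV n := EuclideanSpace.single ⟨0, hn0⟩ (|R| + 2) with hzdef
  have hz_norm : ‖z‖ = |R| + 2 := by
    rw [hzdef, EuclideanSpace.norm_single]
    exact abs_of_nonneg (by positivity)
  have hball : Metric.ball z 1 ⊆ Ωᶜ := by
    intro y hy
    simp only [mem_compl_iff]
    intro hyΩ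
    have h1 : ‖y‖ ≤ R := by simpa [Metric.mem_closedBall] using hR hyΩ
    have h2 : dist y z < 1 := Metric.mem_ball.mp hy
    have h3 : ‖z‖ - ‖y‖ ≤ dist y z := by
      rw [dist_eq_norm]
      calc ‖z‖ - ‖y‖ ≤ ‖z - y‖ := by
            have := norm_sub_norm_le (z) (y)
            linarith [this]
        _ = ‖y - z‖ := norm_sub_rev z y
    have : R ≤ |R| := le_abs_self R
    linarith [hz_norm ▸ h3]
  filter_upwards [hxy] with x hx
  by_contra hux
  have hae2 : ∀ᵐ y ∂(volume : Measure (EV n)), u x = u y ∧ (y ∉ Ω → u y = 0) :=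
    hx.and hu.zero
  have hT0 : (volume : Measure (EV n)) {y | ¬(u x = u y ∧ (y ∉ Ω → u y = 0))} = 0 := by
    rw [← ae_iff] at *
    exact hae2
  have hpos : (volume : Measure (EV n)) (Metric.ball z 1 \
      {y | ¬(u x = u y ∧ (y ∉ Ω → u y = 0))}) ≠ 0 := by
    rw [measure_diff_null hT0]
    exact (Metric.measure_ball_pos _ z one_pos).ne'
  obtain ⟨y, hyb, hyP⟩ := nonempty_of_measure_ne_zero hpos
  simp only [mem_setOf_eq, not_not] at hyP
  have hyΩ : y ∉ Ω := hball hyb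
  exact hux (hyP.1.trans (hyP.2 hyΩ))


private lemma twoStar_pos {s : ℝ} (hs0 : 0 < s) (hn : 2 * s < n) : 2 < twoStar n s := by
  have hd : (0:ℝ) < (n:ℝ) - 2 * s := by linarith
  rw [twoStar, lt_div_iff₀ hd]
  linarith

private lemma n_pos {s : ℝ} (hs0 : 0 < s) (hn : 2 * s < (n:ℝ)) : 0 < n := by
  have : (0:ℝ) < n := lt_trans (by positivity) hn
  exact_mod_cast this

private lemma finiteOn (hΩb : Bornology.IsBounded Ω) :
    IsFiniteMeasure ((volume : Measure (EV n)).restrict Ω) := by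
  constructor
  rw [Measure.restrict_apply_univ]
  exact lt_of_le_of_lt (measure_mono subset_closure)
    (Metric.isCompact_of_isClosed_isBounded isClosed_closure hΩb.closure).measure_lt_top

private lemma sobolev_bound {s : ℝ} {c : ℝ} (hs0 : 0 < s) (hn : 2 * s < (n:ℝ))
    (hΩb : Bornology.IsBounded Ω)
    (hKpos : ∀ x : EV n, x ≠ 0 → 0 < K x)
    (hK1 : Integrable (fun x : EV n => min (‖x‖ ^ 2) 1 * K x))
    (hc : 0 < c)
    (hclub : IsLUB {ρ : ℝ | ∃ u, MemX0 K Ω u ∧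
        ¬ (∀ᵐ x ∂(volume : Measure (EV n)), u x = 0) ∧
        ρ = lpNorm Ω (twoStar n s) u / gNorm K u} c)
    {u : EV n → ℝ} (hu : MemX0 K Ω u) :
    ∫⁻ x in Ω, (ENNReal.ofReal |u x|) ^ (twoStar n s) ∂volume
      ≤ ENNReal.ofReal ((c * gNorm K u) ^ twoStar n s) := by
  set P := twoStar n s with hPdef
  have hn0 : 0 < n := n_pos hs0 hn
  have hP2 : 2 < P := twoStar_pos hs0 hn
  have hP0 : 0 < P := by linarith
  haveI := finiteOn (n := n) hΩb
  have hgN0 : 0 ≤ gNorm K u := Real.sqrt_nonneg _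
  have hRHS0 : 0 ≤ (c * gNorm K u) ^ P := Real.rpow_nonneg (by positivity) _
  -- bound for each truncation
  have key : ∀ m : ℕ, ∫⁻ x in Ω, (ENNReal.ofReal |trunc (m : ℝ) u x|) ^ P ∂volume
      ≤ ENNReal.ofReal ((c * gNorm K u) ^ P) := by
    intro m
    have hTnn : (0:ℝ) ≤ (m : ℝ) := Nat.cast_nonneg m
    have hum : MemX0 K Ω (trunc (m : ℝ) u) := memX0_trunc hn0 hKpos hK1 hu _ hTnn
    -- real integral bound
    have hreal : ∫ x in Ω, |trunc (m : ℝ) u x| ^ P ≤ (c * gNorm K u) ^ P := by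
      by_cases hz : ∀ᵐ x ∂(volume : Measure (EV n)), trunc (m : ℝ) u x = 0
      · have hzero : ∫ x in Ω, |trunc (m : ℝ) u x| ^ P = 0 := by
          have : (fun x => |trunc (m : ℝ) u x| ^ P) =ᵐ[volume.restrict Ω] 0 := by
            refine ae_restrict_of_ae ?_
            filter_upwards [hz] with x hx
            rw [hx]
            simp [Real.zero_rpow hP0.ne']
          rw [integral_congr_ae this]
          simp
        rw [hzero]
        exact hRHS0
      · have hmem : lpNorm Ω P (trunc (m : ℝ) u) / gNorm K (trunc (m : ℝ) u)
            ∈ {ρ : ℝ | ∃ w, MemX0 K Ω w ∧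
              ¬ (∀ᵐ x ∂(volume : Measure (EV n)), w x = 0) ∧
              ρ = lpNorm Ω (twoStar n s) w / gNorm K w} := ⟨trunc (m:ℝ) u, hum, hz, rfl⟩
        have hle := hclub.1 hmem
        have hg0 : 0 < gNorm K (trunc (m : ℝ) u) := by
          rcases eq_or_lt_of_le (Real.sqrt_nonneg (gInner K (trunc (m:ℝ) u) (trunc (m:ℝ) u)))
            with h | h
          · exfalso
            apply hz
            refine eq_zero_of_gInner_zero hn0 hΩb hKpos hum ?_
            have hz2 : Real.sqrt (gInner K (trunc (m:ℝ) u) (trunc (m:ℝ) u)) = 0 := h.symm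
            have := (Real.sqrt_eq_zero'.mp hz2)
            exact le_antisymm this (gInner_self_nonneg hn0 hKpos _)
          · exact h
        have hln : lpNorm Ω P (trunc (m:ℝ) u) ≤ c * gNorm K u := by
          have h1 : lpNorm Ω P (trunc (m:ℝ) u) ≤ c * gNorm K (trunc (m:ℝ) u) :=
            (div_le_iff₀ hg0).mp hle
          refine h1.trans ?_
          refine mul_le_mul_of_nonneg_left ?_ hc.le
          exact Real.sqrt_le_sqrt (gInner_trunc_le hn0 hKpos _ hu hum)
        have hA0 : 0 ≤ ∫ x in Ω, |trunc (m:ℝ) u x| ^ P :=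
          integral_nonneg fun x => Real.rpow_nonneg (abs_nonneg _) _
        have hconv : ∫ x in Ω, |trunc (m:ℝ) u x| ^ P = (lpNorm Ω P (trunc (m:ℝ) u)) ^ P := by
          rw [_root_.lpNorm, ← Real.rpow_mul hA0, one_div, inv_mul_cancel₀ hP0.ne', Real.rpow_one]
        rw [hconv]
        exact Real.rpow_le_rpow (Real.rpow_nonneg hA0 _) hln hP0.le
    -- convert to lintegral
    have hint : Integrable (fun x => |trunc (m:ℝ) u x| ^ P) (volume.restrict Ω) := by
      refine Integrable.mono' (integrable_const ((m:ℝ) ^ P)) ?_ ?_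
      · exact ((hum.meas.abs.pow measurable_const)).aestronglyMeasurable
      · refine Eventually.of_forall fun x => ?_
        rw [Real.norm_eq_abs, abs_of_nonneg (Real.rpow_nonneg (abs_nonneg _) _)]
        refine Real.rpow_le_rpow (abs_nonneg _) ?_ hP0.le
        rw [abs_trunc _ hTnn]
        exact min_le_right _ _
    have hconv2 : ∫⁻ x in Ω, (ENNReal.ofReal |trunc (m:ℝ) u x|) ^ P ∂volume
        = ENNReal.ofReal (∫ x in Ω, |trunc (m:ℝ) u x| ^ P) := by
      rw [ofReal_integral_eq_lintegral_ofReal hint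
        (Eventually.of_forall fun x => Real.rpow_nonneg (abs_nonneg _) _)]
      refine lintegral_congr fun x => ?_
      rw [ENNReal.ofReal_rpow_of_nonneg (abs_nonneg _) hP0.le]
    rw [hconv2]
    exact ENNReal.ofReal_le_ofReal hreal
  -- monotone convergence
  have hmono : ∀ x, Monotone fun m : ℕ => (ENNReal.ofReal |trunc (m:ℝ) u x|) ^ P := by
    intro x m1 m2 h12
    refine ENNReal.rpow_le_rpow ?_ hP0.le
    refine ENNReal.ofReal_le_ofReal ?_
    rw [abs_trunc _ (Nat.cast_nonneg m1), abs_trunc _ (Nat.cast_nonneg m2)]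
    exact min_le_min le_rfl (Nat.cast_le.mpr h12)
  have htend : ∀ x, Tendsto (fun m : ℕ => (ENNReal.ofReal |trunc (m:ℝ) u x|) ^ P) atTop
      (𝓝 ((ENNReal.ofReal |u x|) ^ P)) := by
    intro x
    refine tendsto_atTop_of_eventually_const (i₀ := ⌈|u x|⌉₊) fun m hm => ?_
    have habs : |trunc (m:ℝ) u x| = |u x| := by
      rw [abs_trunc _ (Nat.cast_nonneg m)]
      exact min_eq_left ((Nat.le_ceil _).trans (Nat.cast_le.mpr hm))
    rw [habs]
  have hml := lintegral_tendsto_of_tendsto_of_monotone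
    (f := fun m x => (ENNReal.ofReal |trunc (m:ℝ) u x|) ^ P)
    (F := fun x => (ENNReal.ofReal |u x|) ^ P) (μ := volume.restrict Ω)
    (fun m => ((trunc_meas (m:ℝ) hu.meas).abs.ennreal_ofReal.pow
      measurable_const).aemeasurable)
    (Eventually.of_forall hmono) (Eventually.of_forall htend)
  exact le_of_tendsto' hml key


private lemma coe_nnnorm_real (z : ℝ) : ‖z‖ₑ = ENNReal.ofReal |z| := by
  rw [Real.enorm_eq_ofReal_abs]

private lemma add_rpow_le2 (a b : ℝ≥0∞) {τ : ℝ} (hτ : 0 ≤ τ) :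
    (a + b) ^ τ ≤ 2 ^ τ * (a ^ τ + b ^ τ) := by
  calc (a + b) ^ τ ≤ (2 * max a b) ^ τ := by
        refine ENNReal.rpow_le_rpow ?_ hτ
        rw [two_mul]
        exact add_le_add (le_max_left a b) (le_max_right a b)
    _ = 2 ^ τ * (max a b) ^ τ := ENNReal.mul_rpow_of_nonneg _ _ hτ
    _ ≤ 2 ^ τ * (a ^ τ + b ^ τ) := by
        refine mul_le_mul_right ?_ _
        rcases le_total a b with h | h
        · rw [max_eq_right h]; exact le_add_self
        · rw [max_eq_left h]; exact le_self_add

private lemma critical_eLpNorm_bound {P B : ℝ} (hP2 : 2 < P) {w : EV n → ℝ}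
    (hbound : ∫⁻ x in Ω, (ENNReal.ofReal |w x|) ^ P ∂volume ≤ ENNReal.ofReal B) :
    eLpNorm (fun x => |w x| ^ (P - 2) * w x) (ENNReal.ofReal (P / (P - 1)))
      ((volume : Measure (EV n)).restrict Ω) ≤ (ENNReal.ofReal B) ^ ((P - 1) / P) := by
  have hP1 : (0:ℝ) < P - 1 := by linarith
  have hτ0 : (0:ℝ) < P / (P - 1) := by positivity
  rw [eLpNorm_eq_lintegral_rpow_enorm_toReal (ENNReal.ofReal_pos.mpr hτ0).ne' ENNReal.ofReal_ne_top,
    ENNReal.toReal_ofReal hτ0.le]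
  have hpt : ∀ x : EV n,
      ‖|w x| ^ (P - 2) * w x‖ₑ ^ (P / (P - 1)) = (ENNReal.ofReal |w x|) ^ P := by
    intro x
    rw [coe_nnnorm_real]
    have habs : abs (|w x| ^ (P - 2) * w x) = |w x| ^ (P - 1) := by
      rw [abs_mul, abs_of_nonneg (Real.rpow_nonneg (abs_nonneg _) _)]
      rcases eq_or_ne (w x) 0 with h | h
      · rw [h]
        simp [Real.zero_rpow (show P - 2 ≠ 0 by linarith),
          Real.zero_rpow (show P - 1 ≠ 0 by linarith)]
      · have hne : |w x| ≠ 0 := abs_ne_zero.mpr h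
        conv_rhs => rw [show P - 1 = (P - 2) + 1 by ring, Real.rpow_add_one hne]
    rw [habs, ← ENNReal.ofReal_rpow_of_nonneg (abs_nonneg _) hP1.le, ← ENNReal.rpow_mul]
    congr 1
    field_simp
  rw [lintegral_congr fun x => hpt x, show 1 / (P / (P - 1)) = (P - 1) / P by
    rw [one_div, inv_div]]
  exact ENNReal.rpow_le_rpow hbound (by positivity)

private lemma growth_eLpNorm_bound {P q a₁ a₂ B : ℝ} (hP2 : 2 < P) (hq1 : 1 ≤ q) (hq2 : q < P)
    (ha₁ : 0 < a₁) (ha₂ : 0 < a₂)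
    {g : ℝ → ℝ} (hg1 : ∀ t, |g t| ≤ a₁ + a₂ * |t| ^ (q - 1))
    {w : EV n → ℝ}
    (hbound : ∫⁻ x in Ω, (ENNReal.ofReal |w x|) ^ P ∂volume ≤ ENNReal.ofReal B) :
    eLpNorm (fun x => g (w x)) (ENNReal.ofReal (P / (P - 1)))
      ((volume : Measure (EV n)).restrict Ω)
      ≤ (2 ^ (P / (P - 1)) * ((ENNReal.ofReal a₁) ^ (P / (P - 1))
          * (volume.restrict Ω) Set.univ
          + (ENNReal.ofReal a₂) ^ (P / (P - 1))
          * ((volume.restrict Ω) Set.univ + ENNReal.ofReal B))) ^ ((P - 1) / P) := by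
  have hP1 : (0:ℝ) < P - 1 := by linarith
  have hτ0 : (0:ℝ) < P / (P - 1) := by positivity
  set τ : ℝ := P / (P - 1) with hτdef
  have hσ0 : (0:ℝ) ≤ (q - 1) * τ := mul_nonneg (by linarith) hτ0.le
  have hσP : (q - 1) * τ ≤ P := by
    have h1 : (P - 1) * τ = P := by rw [hτdef]; field_simp
    nlinarith [hτ0.le]
  rw [eLpNorm_eq_lintegral_rpow_enorm_toReal (ENNReal.ofReal_pos.mpr hτ0).ne' ENNReal.ofReal_ne_top,
    ENNReal.toReal_ofReal hτ0.le, show 1 / (P / (P - 1)) = (P - 1) / P by rw [one_div, inv_div]]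
  refine ENNReal.rpow_le_rpow ?_ (by positivity)
  have hptw : ∀ x : EV n, ‖g (w x)‖ₑ ^ τ
      ≤ 2 ^ τ * ((ENNReal.ofReal a₁) ^ τ
        + (ENNReal.ofReal a₂) ^ τ * (ENNReal.ofReal |w x|) ^ ((q - 1) * τ)) := by
    intro x
    have h1 : ‖g (w x)‖ₑ
        ≤ ENNReal.ofReal a₁ + ENNReal.ofReal (a₂ * |w x| ^ (q - 1)) := by
      rw [coe_nnnorm_real, ← ENNReal.ofReal_add ha₁.le (by positivity)]
      exact ENNReal.ofReal_le_ofReal (hg1 _)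
    calc ‖g (w x)‖ₑ ^ τ
        ≤ (ENNReal.ofReal a₁ + ENNReal.ofReal (a₂ * |w x| ^ (q - 1))) ^ τ :=
          ENNReal.rpow_le_rpow h1 hτ0.le
      _ ≤ 2 ^ τ * ((ENNReal.ofReal a₁) ^ τ + (ENNReal.ofReal (a₂ * |w x| ^ (q - 1))) ^ τ) :=
          add_rpow_le2 _ _ hτ0.le
      _ = 2 ^ τ * ((ENNReal.ofReal a₁) ^ τ
          + (ENNReal.ofReal a₂) ^ τ * (ENNReal.ofReal |w x|) ^ ((q - 1) * τ)) := by
          rw [ENNReal.ofReal_mul ha₂.le,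
            ← ENNReal.ofReal_rpow_of_nonneg (abs_nonneg _) (by linarith : (0:ℝ) ≤ q - 1),
            ENNReal.mul_rpow_of_nonneg _ _ hτ0.le, ← ENNReal.rpow_mul]
  have hσint : ∫⁻ x in Ω, (ENNReal.ofReal |w x|) ^ ((q - 1) * τ) ∂volume
      ≤ (volume.restrict Ω) Set.univ + ENNReal.ofReal B := by
    calc ∫⁻ x in Ω, (ENNReal.ofReal |w x|) ^ ((q - 1) * τ) ∂volume
        ≤ ∫⁻ x in Ω, (1 + (ENNReal.ofReal |w x|) ^ P) ∂volume := by
          refine lintegral_mono fun x => ?_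
          rcases le_total (ENNReal.ofReal |w x|) 1 with h | h
          · exact le_trans (ENNReal.rpow_le_one h hσ0) (le_add_right le_rfl)
          · exact le_trans (ENNReal.rpow_le_rpow_of_exponent_le h hσP) (le_add_left le_rfl)
      _ = (volume.restrict Ω) Set.univ + ∫⁻ x in Ω, (ENNReal.ofReal |w x|) ^ P ∂volume := by
          rw [lintegral_add_left measurable_const, lintegral_one]
      _ ≤ (volume.restrict Ω) Set.univ + ENNReal.ofReal B := add_le_add_right hbound _
  calc ∫⁻ x in Ω, ‖g (w x)‖ₑ ^ τ ∂volume
      ≤ ∫⁻ x in Ω, 2 ^ τ * ((ENNReal.ofReal a₁) ^ τ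
        + (ENNReal.ofReal a₂) ^ τ * (ENNReal.ofReal |w x|) ^ ((q - 1) * τ)) ∂volume :=
        lintegral_mono hptw
    _ = 2 ^ τ * ((ENNReal.ofReal a₁) ^ τ * (volume.restrict Ω) Set.univ
        + (ENNReal.ofReal a₂) ^ τ * ∫⁻ x in Ω, (ENNReal.ofReal |w x|) ^ ((q - 1) * τ) ∂volume)
        := by
        rw [lintegral_const_mul' _ _ (ENNReal.rpow_ne_top_of_nonneg hτ0.le ENNReal.ofNat_ne_top),
          lintegral_add_left measurable_const, lintegral_const,
          lintegral_const_mul' _ _ (ENNReal.rpow_ne_top_of_nonneg hτ0.le ENNReal.ofReal_ne_top)]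
    _ ≤ _ := by
        refine mul_le_mul_right (add_le_add_right (mul_le_mul_right hσint _) _) _


end Aux16

/-- **Weak limits of Palais–Smale-type sequences are weak solutions** (step in
the proof of Theorem 4.1): if a bounded sequence `u_j ⇀ u_∞` in `X₀` satisfies
`⟨u_j,v⟩ − μ∫|u_j|^{2*−2}u_j v − λ∫g(u_j)v → 0` for every `v ∈ X₀`, then `u_∞`
is a weak solution of `(P_{λ,μ})`. -/
theorem statement16
    (n : ℕ) (s : ℝ) (hs : s ∈ Set.Ioo (0:ℝ) 1) (hn : 2 * s < n)
    (Ω : Set (EV n)) (hΩo : IsOpen Ω) (hΩne : Ω.Nonempty) (hΩb : Bornology.IsBounded Ω)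
    (K : EV n → ℝ)
    (hKpos : ∀ x : EV n, x ≠ 0 → 0 < K x)
    (hK1 : Integrable (fun x : EV n => min (‖x‖ ^ 2) 1 * K x))
    (hK2 : ∃ k₀ > 0, ∀ x : EV n, x ≠ 0 → k₀ * ‖x‖ ^ (-((n : ℝ) + 2 * s)) ≤ K x)
    (c : ℝ) (hc : 0 < c)
    (hclub : IsLUB {ρ : ℝ | ∃ u, MemX0 K Ω u ∧
        ¬ (∀ᵐ x ∂(volume : Measure (EV n)), u x = 0) ∧
        ρ = lpNorm Ω (twoStar n s) u / gNorm K u} c)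
    (hcpt : ∀ (uj : ℕ → EV n → ℝ) (u : EV n → ℝ), (∀ j, MemX0 K Ω (uj j)) →
        MemX0 K Ω u → WeakConv K Ω uj u → ∀ p : ℝ, 1 ≤ p → p < twoStar n s →
        Tendsto (fun j => lpNorm Ω p (fun x => uj j x - u x)) atTop (𝓝 0))
    (lam μ : ℝ) (hlam : 0 < lam) (hμ : 0 < μ)
    (g : ℝ → ℝ) (hgc : Continuous g)
    (a₁ a₂ q : ℝ) (ha₁ : 0 < a₁) (ha₂ : 0 < a₂) (hq₁ : 1 ≤ q) (hq₂ : q < twoStar n s)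
    (hg1 : ∀ t : ℝ, |g t| ≤ a₁ + a₂ * |t| ^ (q - 1))
    -- (g3): `lim_{t→0} g(t)/t = 0`:
    (hg3 : Tendsto (fun t : ℝ => g t / t) (𝓝[≠] 0) (𝓝 0))
    (uj : ℕ → EV n → ℝ) (uinf : EV n → ℝ)
    (hujX : ∀ j, MemX0 K Ω (uj j))
    (hbdd : ∃ M : ℝ, ∀ j, gNorm K (uj j) ≤ M)
    (huinfX : MemX0 K Ω uinf)
    (hweak : WeakConv K Ω uj uinf)
    (hPS : ∀ v, MemX0 K Ω v →
      Tendsto (fun j => gInner K (uj j) v -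
        μ * (∫ x in Ω, |uj j x| ^ (twoStar n s - 2) * uj j x * v x) -
        lam * ∫ x in Ω, g (uj j x) * v x) atTop (𝓝 0)) :
    ∀ v, MemX0 K Ω v → gInner K uinf v =
      μ * (∫ x in Ω, |uinf x| ^ (twoStar n s - 2) * uinf x * v x) +
        lam * ∫ x in Ω, g (uinf x) * v x := by
  intro v hv
  have hs0 : 0 < s := hs.1
  have hn0 : 0 < n := n_pos hs0 hn
  set P : ℝ := twoStar n s with hPdef
  have hP2 : 2 < P := twoStar_pos hs0 hn
  have hP0 : 0 < P := by linarith
  have hP1 : (0:ℝ) < P - 1 := by linarith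
  haveI := finiteOn (n := n) hΩb
  obtain ⟨M, hM⟩ := hbdd
  have hM0 : 0 ≤ M := (Real.sqrt_nonneg _).trans (hM 0)
  have hsobW : ∀ w : EV n → ℝ, MemX0 K Ω w →
      ∫⁻ x in Ω, (ENNReal.ofReal |w x|) ^ P ∂volume ≤ ENNReal.ofReal ((c * gNorm K w) ^ P) :=
    fun w hw => sobolev_bound hs0 hn hΩb hKpos hK1 hc hclub hw
  have hsobM : ∀ j, ∫⁻ x in Ω, (ENNReal.ofReal |uj j x|) ^ P ∂volume
      ≤ ENNReal.ofReal ((c * M) ^ P) := fun j =>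
    (hsobW _ (hujX j)).trans (ENNReal.ofReal_le_ofReal
      (Real.rpow_le_rpow (mul_nonneg hc.le (Real.sqrt_nonneg _)) (mul_le_mul_of_nonneg_left (hM j) hc.le) hP0.le))
  have hmemP : ∀ w : EV n → ℝ, MemX0 K Ω w →
      MemLp w (ENNReal.ofReal P) (volume.restrict Ω) := by
    intro w hw
    refine ⟨hw.meas.aestronglyMeasurable, ?_⟩
    rw [eLpNorm_eq_lintegral_rpow_enorm_toReal (ENNReal.ofReal_pos.mpr hP0).ne' ENNReal.ofReal_ne_top,
      ENNReal.toReal_ofReal hP0.le]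
    refine ENNReal.rpow_lt_top_of_nonneg (by positivity) ?_
    refine ne_of_lt (lt_of_le_of_lt ?_ (ENNReal.ofReal_lt_top (r := (c * gNorm K w) ^ P)))
    calc ∫⁻ x in Ω, ‖w x‖ₑ ^ P ∂volume
        = ∫⁻ x in Ω, (ENNReal.ofReal |w x|) ^ P ∂volume :=
          lintegral_congr fun x => by rw [coe_nnnorm_real]
      _ ≤ _ := hsobW w hw
  have hvP := hmemP v hv
  have huinfP := hmemP uinf huinfX
  have hr1 : (1:ℝ≥0∞) ≤ ENNReal.ofReal P := ENNReal.one_le_ofReal.mpr (by linarith)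
  have hdint : ∀ j, Integrable (fun x => uj j x - uinf x) (volume.restrict Ω) := fun j =>
    memLp_one_iff_integrable.mp (((hmemP _ (hujX j)).sub huinfP).mono_exponent hr1)
  have hL1r : Tendsto (fun j => ∫ x in Ω, |uj j x - uinf x|) atTop (𝓝 0) := by
    have h := hcpt uj uinf hujX huinfX hweak 1 le_rfl (by linarith)
    simpa [_root_.lpNorm] using h
  have hL1 : Tendsto (fun j => eLpNorm ((fun x => uj j x) - uinf) 1 (volume.restrict Ω))
      atTop (𝓝 0) := by
    have heq : ∀ j, eLpNorm ((fun x => uj j x) - uinf) 1 (volume.restrict Ω)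
        = ENNReal.ofReal (∫ x in Ω, |uj j x - uinf x|) := by
      intro j
      rw [eLpNorm_one_eq_lintegral_enorm,
        ofReal_integral_eq_lintegral_ofReal ((hdint j).abs)
          (Eventually.of_forall fun x => abs_nonneg _)]
      refine lintegral_congr fun x => ?_
      rw [Pi.sub_apply, coe_nnnorm_real]
    refine (tendsto_congr heq).mpr ?_
    have := (ENNReal.continuous_ofReal.tendsto 0).comp hL1r
    simpa [Function.comp_def] using this
  have hmc : TendstoInMeasure (volume.restrict Ω) (fun j => uj j) atTop uinf :=
    tendstoInMeasure_of_tendsto_eLpNorm one_ne_zero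
      (fun j => (hujX j).meas.aestronglyMeasurable) huinfX.meas.aestronglyMeasurable hL1
  obtain ⟨φ, hφm, hφae⟩ := hmc.exists_seq_tendsto_ae
  have hτ0 : (0:ℝ) < P / (P - 1) := by positivity
  have hrt : (1:ℝ≥0∞)/(ENNReal.ofReal (P/(P-1))) + 1/(ENNReal.ofReal P) = 1 := by
    rw [one_div, one_div, ← ENNReal.ofReal_inv_of_pos hτ0, ← ENNReal.ofReal_inv_of_pos hP0,
      inv_div, ← ENNReal.ofReal_add (by positivity) (by positivity),
      show (P-1)/P + P⁻¹ = 1 by rw [← one_div, ← add_div, sub_add_cancel, div_self hP0.ne']]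
    exact ENNReal.ofReal_one
  have hBlim : Tendsto (fun k => ∫ x in Ω, |uj (φ k) x| ^ (P - 2) * uj (φ k) x * v x)
      atTop (𝓝 (∫ x in Ω, |uinf x| ^ (P - 2) * uinf x * v x)) := by
    refine vitali_mul hrt hr1 ENNReal.ofReal_ne_top
      (h := fun k => fun x => |uj (φ k) x| ^ (P - 2) * uj (φ k) x)
      (hlim := fun x => |uinf x| ^ (P - 2) * uinf x)
      (fun k => (((hujX (φ k)).meas.abs.pow measurable_const).mul
        (hujX (φ k)).meas).aestronglyMeasurable)
      hvP (C := (ENNReal.ofReal ((c*M)^P)) ^ ((P-1)/P))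
      (ENNReal.rpow_ne_top_of_nonneg (by positivity) ENNReal.ofReal_ne_top)
      (fun k => critical_eLpNorm_bound hP2 (hsobM (φ k))) ?_
    filter_upwards [hφae] with x hx
    have hcont : ContinuousAt (fun z : ℝ => |z| ^ (P - 2) * z) (uinf x) := by
      refine ContinuousAt.mul ?_ continuousAt_id
      exact ContinuousAt.rpow_const (continuous_abs.continuousAt) (Or.inr (by linarith))
    exact (hcont.tendsto).comp hx
  have hClim : Tendsto (fun k => ∫ x in Ω, g (uj (φ k) x) * v x)
      atTop (𝓝 (∫ x in Ω, g (uinf x) * v x)) := by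
    refine vitali_mul hrt hr1 ENNReal.ofReal_ne_top
      (h := fun k => fun x => g (uj (φ k) x))
      (hlim := fun x => g (uinf x))
      (fun k => (hgc.measurable.comp (hujX (φ k)).meas).aestronglyMeasurable)
      hvP
      (C := (2 ^ (P / (P - 1)) * ((ENNReal.ofReal a₁) ^ (P / (P - 1))
          * (volume.restrict Ω) Set.univ
          + (ENNReal.ofReal a₂) ^ (P / (P - 1))
          * ((volume.restrict Ω) Set.univ + ENNReal.ofReal ((c*M)^P)))) ^ ((P - 1) / P))
      (ENNReal.rpow_ne_top_of_nonneg (by positivity) ?_)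
      (fun k => growth_eLpNorm_bound hP2 hq₁ hq₂ ha₁ ha₂ hg1 (hsobM (φ k))) ?_
    · refine ENNReal.mul_ne_top (ENNReal.rpow_ne_top_of_nonneg hτ0.le ENNReal.ofNat_ne_top) ?_
      refine ENNReal.add_ne_top.mpr ⟨ENNReal.mul_ne_top
        (ENNReal.rpow_ne_top_of_nonneg hτ0.le ENNReal.ofReal_ne_top) (measure_ne_top _ _), ?_⟩
      exact ENNReal.mul_ne_top (ENNReal.rpow_ne_top_of_nonneg hτ0.le ENNReal.ofReal_ne_top)
        (ENNReal.add_ne_top.mpr ⟨measure_ne_top _ _, ENNReal.ofReal_ne_top⟩)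
    · filter_upwards [hφae] with x hx
      exact ((hgc.tendsto (uinf x))).comp hx
  have hcomb : Tendsto (fun j => μ * (∫ x in Ω, |uj j x| ^ (P - 2) * uj j x * v x)
      + lam * ∫ x in Ω, g (uj j x) * v x) atTop (𝓝 (gInner K uinf v)) := by
    have h2 := (hweak v hv).sub (hPS v hv)
    rw [sub_zero] at h2
    exact h2.congr fun j => by ring
  have hsub : Tendsto (fun k => μ * (∫ x in Ω, |uj (φ k) x| ^ (P - 2) * uj (φ k) x * v x)
      + lam * ∫ x in Ω, g (uj (φ k) x) * v x) atTop (𝓝 (gInner K uinf v)) :=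
    hcomb.comp (hφm.tendsto_atTop)
  have hsub2 : Tendsto (fun k => μ * (∫ x in Ω, |uj (φ k) x| ^ (P - 2) * uj (φ k) x * v x)
      + lam * ∫ x in Ω, g (uj (φ k) x) * v x) atTop
      (𝓝 (μ * (∫ x in Ω, |uinf x| ^ (P - 2) * uinf x * v x)
        + lam * ∫ x in Ω, g (uinf x) * v x)) :=
    (hBlim.const_mul μ).add (hClim.const_mul lam)
  exact tendsto_nhds_unique hsub hsub2
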